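/- arXiv:1607.05411 — 2 statements merged into one kernel-verified Lean document; each statement's English description precedes it below -/
import Mathlib

section
/- Assume the lower central series of G intersects trivially (⋂_k Γ_G(k) = 1), and that for each 1 ≤ p ≤ k the joint kernel of the induced maps s_{ij}^{(p)} : ℒ_G(p) → gr^p(𝔍_G) over all 1 ≤ i,j ≤ m is trivial. Then 𝒟_G^m(k) ⊆ 𝒜_G(k). -/
set_option synthInstance.maxHeartbeats 1000000
set_option maxHeartbeats 1000000
open scoped BigOperators

/-- The set of `SL(m,ℂ)`-representations of a group `G`. -/
abbrev SLRep (G : Type*) [Group G] (m : ℕ) := G →* Matrix.SpecialLinearGroup (Fin m) ℂ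

/-- The `(i,j)`-component function `a_{ij}(x)`. -/
noncomputable def afun {G : Type*} [Group G] (m : ℕ) (i j : Fin m) (x : G) :
    SLRep G m → ℂ :=
  fun ρ => ((ρ x : Matrix.SpecialLinearGroup (Fin m) ℂ) : Matrix (Fin m) (Fin m) ℂ) i j

/-- The `SL(m,ℂ)`-representation algebra `𝔯_ℚ^m(G)`: the ℚ-subalgebra of functions on the
representation variety generated by all component functions. -/
noncomputable def RepAlg (G : Type*) [Group G] (m : ℕ) : Subalgebra ℚ (SLRep G m → ℂ) :=
  Algebra.adjoin ℚ {f | ∃ i j x, f = afun m i j x}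

theorem afun_mem {G : Type*} [Group G] (m : ℕ) (i j : Fin m) (x : G) :
    afun m i j x ∈ RepAlg G m :=
  Algebra.subset_adjoin ⟨i, j, x, rfl⟩

/-- `s_{ij}(x) = a_{ij}(x) - δ_{ij}`. -/
noncomputable def sfun {G : Type*} [Group G] (m : ℕ) (i j : Fin m) (x : G) :
    SLRep G m → ℂ :=
  afun m i j x - if i = j then 1 else 0

theorem sfun_mem {G : Type*} [Group G] (m : ℕ) (i j : Fin m) (x : G) :
    sfun m i j x ∈ RepAlg G m := by
  unfold sfun
  refine sub_mem (afun_mem m i j x) ?_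
  split_ifs
  · exact one_mem _
  · exact zero_mem _

/-- `a_{ij}(x)` as an element of the representation algebra. -/
noncomputable def aEl {G : Type*} [Group G] (m : ℕ) (i j : Fin m) (x : G) : RepAlg G m :=
  ⟨afun m i j x, afun_mem m i j x⟩

/-- `s_{ij}(x)` as an element of the representation algebra. -/
noncomputable def sEl {G : Type*} [Group G] (m : ℕ) (i j : Fin m) (x : G) : RepAlg G m :=
  ⟨sfun m i j x, sfun_mem m i j x⟩

/-- The ideal `𝔍_G` generated by all `s_{ij}(x)`, `x ∈ G`. -/
noncomputable def JId (G : Type*) [Group G] (m : ℕ) : Ideal (RepAlg G m) :=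
  Ideal.span {f | ∃ i j x, f = sEl m i j x}

/-- The ideal generated by the `s_{ij}(x_l)` for a generating family `x`. -/
noncomputable def JIdGen {G : Type*} [Group G] (m n : ℕ) (x : Fin n → G) :
    Ideal (RepAlg G m) :=
  Ideal.span {f | ∃ i j l, f = sEl m i j (x l)}

/-- The pullback action of `σ ∈ Aut G` on functions on the representation variety:
`χ^σ(ρ) = χ(ρ ∘ σ)`. -/
noncomputable def pullback {G : Type*} [Group G] (m : ℕ) (σ : MulAut G) :
    (SLRep G m → ℂ) →ₐ[ℚ] (SLRep G m → ℂ) where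
  toFun χ := fun ρ => χ (ρ.comp σ.toMonoidHom)
  map_one' := rfl
  map_mul' _ _ := rfl
  map_zero' := rfl
  map_add' _ _ := rfl
  commutes' _ := rfl

theorem pullback_afun {G : Type*} [Group G] (m : ℕ) (σ : MulAut G) (i j : Fin m) (x : G) :
    pullback m σ (afun m i j x) = afun m i j (σ x) := rfl

theorem pullback_maps {G : Type*} [Group G] (m : ℕ) (σ : MulAut G) :
    (RepAlg G m).map (pullback m σ) ≤ RepAlg G m := by
  rw [RepAlg, AlgHom.map_adjoin]
  apply Algebra.adjoin_mono
  rintro _ ⟨g, ⟨i, j, x, rfl⟩, rfl⟩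
  exact ⟨i, j, σ x, rfl⟩

/-- The action of `Aut G` on the representation algebra. -/
noncomputable def actA {G : Type*} [Group G] (m : ℕ) (σ : MulAut G) :
    RepAlg G m →ₐ[ℚ] RepAlg G m :=
  ((pullback m σ).comp (RepAlg G m).val).codRestrict (RepAlg G m)
    (fun f => pullback_maps m σ ⟨(f : SLRep G m → ℂ), f.2, rfl⟩)

/-- The filtration `𝒟_G^m(k) = Ker(Aut G → Aut(𝔍_G/𝔍_G^{k+1}))`, described elementwise. -/
noncomputable def Dfil (G : Type*) [Group G] (m k : ℕ) : Set (MulAut G) :=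
  {σ | ∀ f ∈ JId G m, actA m σ f - f ∈ JId G m ^ (k + 1)}

theorem actA_sEl {G : Type*} [Group G] (m : ℕ) (σ : MulAut G) (i j : Fin m) (x : G) :
    actA m σ (sEl m i j x) = sEl m i j (σ x) := by
  apply Subtype.ext
  funext ρ
  show sfun m i j x (ρ.comp σ.toMonoidHom) = sfun m i j (σ x) ρ
  simp only [sfun, afun, Pi.sub_apply]
  split_ifs <;> rfl

theorem sEl_mem_JId {G : Type*} [Group G] (m : ℕ) (i j : Fin m) (x : G) :
    sEl m i j x ∈ JId G m :=
  Ideal.subset_span ⟨i, j, x, rfl⟩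

theorem sEl_conj {G : Type*} [Group G] (m : ℕ) (σ : MulAut G) (g : G) (i j : Fin m) :
    sEl m i j (g⁻¹ * σ g) =
      ∑ l : Fin m, aEl m i l g⁻¹ * (sEl m l j (σ g) - sEl m l j g) := by
  apply Subtype.ext
  have coe_sum : ((∑ l : Fin m, aEl m i l g⁻¹ * (sEl m l j (σ g) - sEl m l j g) :
      RepAlg G m) : SLRep G m → ℂ) =
      ∑ l : Fin m, (aEl m i l g⁻¹ : SLRep G m → ℂ) *
        ((sEl m l j (σ g) : SLRep G m → ℂ) - (sEl m l j g : SLRep G m → ℂ)) := by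
    push_cast
    rfl
  rw [coe_sum]
  funext ρ
  have h1 : ((ρ (g⁻¹ * σ g) : Matrix.SpecialLinearGroup (Fin m) ℂ) :
      Matrix (Fin m) (Fin m) ℂ) i j =
      ∑ l : Fin m, ((ρ g⁻¹ : Matrix.SpecialLinearGroup (Fin m) ℂ) :
        Matrix (Fin m) (Fin m) ℂ) i l *
        ((ρ (σ g) : Matrix.SpecialLinearGroup (Fin m) ℂ) :
          Matrix (Fin m) (Fin m) ℂ) l j := by
    rw [map_mul ρ]
    simp [Matrix.mul_apply]
  have h2 : (if i = j then (1 : ℂ) else 0) =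
      ∑ l : Fin m, ((ρ g⁻¹ : Matrix.SpecialLinearGroup (Fin m) ℂ) :
        Matrix (Fin m) (Fin m) ℂ) i l *
        ((ρ g : Matrix.SpecialLinearGroup (Fin m) ℂ) :
          Matrix (Fin m) (Fin m) ℂ) l j := by
    have h0 : ((ρ g⁻¹ * ρ g : Matrix.SpecialLinearGroup (Fin m) ℂ) :
        Matrix (Fin m) (Fin m) ℂ) i j = if i = j then (1 : ℂ) else 0 := by
      rw [← map_mul ρ, inv_mul_cancel, map_one]
      simp [Matrix.one_apply]
    rw [Matrix.SpecialLinearGroup.coe_mul, Matrix.mul_apply] at h0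
    rw [← h0]
  simp only [sEl, sfun, afun, aEl, Pi.sub_apply, Pi.mul_apply, Finset.sum_apply,
    Pi.one_apply, Pi.zero_apply, apply_ite (fun f : SLRep G m → ℂ => f ρ)]
  rw [h1]
  conv_lhs => rw [h2]
  rw [← Finset.sum_sub_distrib]
  congr 1
  funext l
  ring

theorem sEl_conj_mem {G : Type*} [Group G] (m k : ℕ) (σ : MulAut G)
    (hσ : σ ∈ Dfil G m k) (g : G) (i j : Fin m) :
    sEl m i j (g⁻¹ * σ g) ∈ JId G m ^ (k + 1) := by
  rw [sEl_conj m σ g i j]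
  refine Ideal.sum_mem _ fun l _ => Ideal.mul_mem_left _ _ ?_
  have := hσ (sEl m l j g) (sEl_mem_JId m l j g)
  rwa [actA_sEl] at this

/-- if the lower central series of `G` intersects trivially and for each
`1 ≤ p ≤ k` the joint kernel of the induced maps `s_{ij}^{(p)} : ℒ_G(p) → gr^p(𝔍_G)` is
trivial, then `𝒟_G^m(k) ⊆ 𝒜_G(k)`. -/
theorem D_subset_AJohnson {G : Type*} [Group G] (m k : ℕ) (hm : 2 ≤ m) (hk : 1 ≤ k)
    (hres : ∀ g : G, (∀ p : ℕ, g ∈ (⊤ : Subgroup G).lowerCentralSeries p) → g = 1)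
    (hker : ∀ p : ℕ, 1 ≤ p → p ≤ k → ∀ y ∈ (⊤ : Subgroup G).lowerCentralSeries (p - 1),
      (∀ i j : Fin m, sEl m i j y ∈ JId G m ^ (p + 1)) → y ∈ (⊤ : Subgroup G).lowerCentralSeries p) :
    Dfil G m k ⊆ {σ : MulAut G | ∀ g : G, g⁻¹ * σ g ∈ (⊤ : Subgroup G).lowerCentralSeries k} := by
  intro σ hσ g
  have key : ∀ p : ℕ, p ≤ k → g⁻¹ * σ g ∈ (⊤ : Subgroup G).lowerCentralSeries p := by
    intro p
    induction p with
    | zero => intro _; simp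
    | succ q ih =>
      intro hq
      refine hker (q + 1) (Nat.le_add_left 1 q) hq _ (by simpa using ih (by omega)) ?_
      intro i j
      exact Ideal.pow_le_pow_right (by omega) (sEl_conj_mem m k σ hσ g i j)
  exact key k le_rfl
end

section
/- For the free abelian group H of rank n, the images s_{ij}(x̄_l) for 1 ≤ i,j ≤ m with (i,j) ≠ (m,m) and 1 ≤ l ≤ n form a ℚ-basis of gr¹(𝔍_H) = 𝔍_H/𝔍_H²; in particular gr¹(𝔍_H) ≅ H_ℚ^{⊕(m²−1)} and has dimension (m²−1)n. -/
set_option synthInstance.maxHeartbeats 1000000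
set_option maxHeartbeats 1000000
open scoped BigOperators

/-- Index set: pairs `(i,j) ≠ (m,m)` together with a generator index `l`. -/
abbrev Eidx (m n : ℕ) :=
  {p : Fin m × Fin m // ((p.1 : ℕ), (p.2 : ℕ)) ≠ (m - 1, m - 1)} × Fin n

/-- The free abelian group `H = ℤⁿ` (written multiplicatively). -/
abbrev FreeAb (n : ℕ) := Multiplicative (Fin n → ℤ)

/-- The standard basis of `H`. -/
noncomputable def xH (n : ℕ) : Fin n → FreeAb n := fun l => Multiplicative.ofAdd (Pi.single l 1)


section DetLemma
variable {R : Type*} [CommRing R] (I : Ideal R)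

lemma prod_sub_one_sub_sum_mem {ι : Type*} (s : Finset ι) (f : ι → R)
    (h : ∀ i ∈ s, f i - 1 ∈ I) :
    (∏ i ∈ s, f i) - 1 - ∑ i ∈ s, (f i - 1) ∈ I ^ 2 := by
  classical
  revert h
  induction s using Finset.induction_on with
  | empty => intro h; simp
  | @insert a s ha ih =>
    intro h
    rw [Finset.prod_insert ha, Finset.sum_insert ha]
    have ih' := ih (fun i hi => h i (Finset.mem_insert_of_mem hi))
    have hS : (∑ i ∈ s, (f i - 1)) ∈ I := Ideal.sum_mem _ (fun i hi => h i (Finset.mem_insert_of_mem hi))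
    have ha' : f a - 1 ∈ I := h a (Finset.mem_insert_self a s)
    have key : f a * (∏ i ∈ s, f i) - 1 - ((f a - 1) + ∑ i ∈ s, (f i - 1)) =
        ((∏ i ∈ s, f i) - 1 - ∑ i ∈ s, (f i - 1)) +
        ((f a - 1) * (∑ i ∈ s, (f i - 1)) +
         (f a - 1) * ((∏ i ∈ s, f i) - 1 - ∑ i ∈ s, (f i - 1))) := by ring
    rw [key]
    refine add_mem ih' (add_mem ?_ (Ideal.mul_mem_left _ _ ih'))
    rw [pow_two]
    exact Ideal.mul_mem_mul ha' hS

lemma det_sub_one_sub_sum_mem {m : ℕ} (M : Matrix (Fin m) (Fin m) R)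
    (h : ∀ i j, M i j - (if i = j then 1 else 0) ∈ I) :
    M.det - 1 - ∑ i, (M i i - 1) ∈ I ^ 2 := by
  classical
  rw [Matrix.det_apply, ← Finset.add_sum_erase _ _ (Finset.mem_univ (1 : Equiv.Perm (Fin m)))]
  have h1 : (Equiv.Perm.sign (1 : Equiv.Perm (Fin m))) • (∏ i, M ((1 : Equiv.Perm (Fin m)) i) i)
      = ∏ i, M i i := by simp
  rw [h1]
  have hd : ∀ i : Fin m, M i i - 1 ∈ I := by
    intro i; have := h i i; simpa using this
  have hmain := prod_sub_one_sub_sum_mem I Finset.univ (fun i => M i i)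
    (fun i _ => hd i)
  have hrest : (∑ σ ∈ Finset.univ.erase (1 : Equiv.Perm (Fin m)),
      Equiv.Perm.sign σ • ∏ i, M (σ i) i) ∈ I ^ 2 := by
    refine Ideal.sum_mem _ ?_
    intro σ hσ
    have hσ1 : σ ≠ 1 := (Finset.mem_erase.mp hσ).1
    have hex : ∃ a, σ a ≠ a := by
      by_contra hc
      push_neg at hc
      exact hσ1 (Equiv.ext hc)
    obtain ⟨a, ha⟩ := hex
    have hb : σ (σ a) ≠ σ a := fun hh => ha (σ.injective hh)
    have hba : σ a ≠ a := ha
    have hoff : ∀ i, σ i ≠ i → M (σ i) i ∈ I := by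
      intro i hi
      have := h (σ i) i
      rw [if_neg hi, sub_zero] at this
      exact this
    have hmem : (∏ i, M (σ i) i) ∈ I ^ 2 := by
      rw [← Finset.mul_prod_erase _ _ (Finset.mem_univ a)]
      have hbin : σ a ∈ Finset.univ.erase a := Finset.mem_erase.mpr ⟨hba, Finset.mem_univ _⟩
      rw [← Finset.mul_prod_erase _ _ hbin, pow_two]
      exact Ideal.mul_mem_mul (hoff a ha)
        (Ideal.mul_mem_right _ _ (hoff (σ a) hb))
    have : Equiv.Perm.sign σ • (∏ i, M (σ i) i) = ((Equiv.Perm.sign σ : ℤ)) • (∏ i, M (σ i) i) := rfl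
    rw [this]
    exact zsmul_mem hmem _
  have key : (∏ i, M i i) + (∑ σ ∈ Finset.univ.erase (1 : Equiv.Perm (Fin m)),
        Equiv.Perm.sign σ • ∏ i, M (σ i) i) - 1 - ∑ i, (M i i - 1) =
      ((∏ i, M i i) - 1 - ∑ i, (M i i - 1)) +
      (∑ σ ∈ Finset.univ.erase (1 : Equiv.Perm (Fin m)),
        Equiv.Perm.sign σ • ∏ i, M (σ i) i) := by ring
  rw [key]
  exact add_mem hmain hrest

end DetLemma

section Lemmas
variable {G : Type*} [Group G] (m : ℕ)

lemma delta_sum_lemma (m : ℕ) (i j : Fin m) (A B : Fin m → ℂ) :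
    (∑ k, A k * B k) - (if i = j then 1 else 0) =
    (A j - if i = j then 1 else 0) + ((B i - if i = j then 1 else 0) +
    ∑ k, (A k - if i = k then 1 else 0) * (B k - if k = j then 1 else 0)) := by
  have h1 : ∑ k, (A k - if i = k then 1 else 0) * (B k - if k = j then 1 else 0)
      = ∑ k, (A k * B k - (if i = k then 1 else 0) * B k
        - (if k = j then 1 else 0) * A k
        + (if i = k then (if k = j then (1:ℂ) else 0) else 0)) := by
    apply Finset.sum_congr rfl
    intro k _
    split_ifs <;> ring
  rw [h1]
  rw [Finset.sum_add_distrib, Finset.sum_sub_distrib, Finset.sum_sub_distrib]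
  simp [Finset.sum_ite_eq, ite_mul]
  ring

lemma aEl_mul (i j : Fin m) (x y : G) :
    aEl m i j (x * y) = ∑ k, aEl m i k x * aEl m k j y := by
  apply Subtype.ext
  show afun m i j (x * y) = _
  rw [AddSubmonoidClass.coe_finset_sum]
  funext ρ
  rw [Finset.sum_apply]
  show ((ρ (x * y) : Matrix.SpecialLinearGroup (Fin m) ℂ) : Matrix (Fin m) (Fin m) ℂ) i j = _
  rw [map_mul]
  rw [Matrix.SpecialLinearGroup.coe_mul, Matrix.mul_apply]
  apply Finset.sum_congr rfl
  intro k _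
  rfl

lemma sEl_eq (i j : Fin m) (x : G) :
    sEl m i j x = aEl m i j x - (if i = j then 1 else 0) := by
  apply Subtype.ext
  show sfun m i j x = _
  by_cases h : i = j <;> simp [sfun, h, aEl, sEl]

lemma sEl_mul (i j : Fin m) (x y : G) :
    sEl m i j (x * y) = sEl m i j x + (sEl m i j y +
      ∑ k, sEl m i k x * sEl m k j y) := by
  apply Subtype.ext
  show sfun m i j (x * y) = _
  rw [show ((sEl m i j x + (sEl m i j y + ∑ k, sEl m i k x * sEl m k j y) : RepAlg G m) : SLRep G m → ℂ)
      = sfun m i j x + (sfun m i j y + ∑ k, sfun m i k x * sfun m k j y) by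
    push_cast [AddSubmonoidClass.coe_finset_sum]; rfl]
  funext ρ
  simp only [sfun, afun, Pi.add_apply, Pi.sub_apply, Finset.sum_apply, Pi.mul_apply,
    apply_ite (fun f : SLRep G m → ℂ => f ρ), Pi.one_apply, Pi.zero_apply]
  rw [map_mul, Matrix.SpecialLinearGroup.coe_mul, Matrix.mul_apply]
  have := delta_sum_lemma m i j
    (fun k => ((ρ x : Matrix.SpecialLinearGroup (Fin m) ℂ) : Matrix (Fin m) (Fin m) ℂ) i k)
    (fun k => ((ρ y : Matrix.SpecialLinearGroup (Fin m) ℂ) : Matrix (Fin m) (Fin m) ℂ) k j)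
  simpa using this

lemma sEl_one (i j : Fin m) : sEl m i j (1 : G) = 0 := by
  apply Subtype.ext
  show sfun m i j 1 = 0
  funext ρ
  simp [sfun, afun, Matrix.one_apply, apply_ite (fun f : SLRep G m → ℂ => f ρ)]

end Lemmas

section FreeAbLemmas
variable (m n : ℕ)

lemma xH_gen (n : ℕ) (v : FreeAb n) :
    v = ∏ l, (xH n l) ^ (Multiplicative.toAdd v l) := by
  apply Multiplicative.toAdd.injective
  rw [show Multiplicative.toAdd (∏ l, (xH n l) ^ (Multiplicative.toAdd v l))
      = ∑ l, Multiplicative.toAdd ((xH n l) ^ (Multiplicative.toAdd v l)) from rfl]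
  funext t
  simp only [Finset.sum_apply, xH, toAdd_zpow, toAdd_ofAdd, Pi.smul_apply, Pi.single_apply,
    smul_eq_mul]
  simp [Finset.sum_ite_eq]

lemma closure_xH (n : ℕ) : Subgroup.closure (Set.range (xH n)) = ⊤ := by
  rw [eq_top_iff]
  intro v _
  rw [xH_gen n v]
  exact Subgroup.prod_mem _ fun l _ =>
    Subgroup.zpow_mem _ (Subgroup.subset_closure (Set.mem_range_self l)) _

lemma sEl_mem_JIdGen (v : FreeAb n) (i j : Fin m) :
    sEl m i j v ∈ JIdGen m n (xH n) := by
  have hv : v ∈ Subgroup.closure (Set.range (xH n)) := by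
    rw [closure_xH]; trivial
  induction hv using Subgroup.closure_induction generalizing i j with
  | mem x hx =>
    obtain ⟨l, rfl⟩ := hx
    exact Ideal.subset_span ⟨i, j, l, rfl⟩
  | one => rw [sEl_one]; exact zero_mem _
  | mul x y hx hy ihx ihy =>
    rw [sEl_mul]
    exact add_mem (ihx i j) (add_mem (ihy i j)
      (Ideal.sum_mem _ fun k _ => Ideal.mul_mem_right _ _ (ihx i k)))
  | inv x hx ihx =>
    have h0 := sEl_mul m i j x x⁻¹
    rw [mul_inv_cancel, sEl_one] at h0
    have h1 : sEl m i j x⁻¹ =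
        -sEl m i j x - ∑ k, sEl m i k x * sEl m k j x⁻¹ := by
      linear_combination -h0
    rw [h1]
    exact sub_mem (neg_mem (ihx i j))
      (Ideal.sum_mem _ fun k _ => Ideal.mul_mem_right _ _ (ihx i k))

lemma exists_decomp (f : RepAlg (FreeAb n) m) :
    ∃ q : ℚ, f - algebraMap ℚ _ q ∈ JIdGen m n (xH n) := by
  obtain ⟨fv, hf⟩ := f
  induction hf using Algebra.adjoin_induction with
  | mem x hx =>
    obtain ⟨i, j, x0, rfl⟩ := hx
    refine ⟨if i = j then 1 else 0, ?_⟩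
    have h1 : (⟨afun m i j x0, Algebra.subset_adjoin ⟨i,j,x0,rfl⟩⟩ : RepAlg (FreeAb n) m)
        = aEl m i j x0 := rfl
    have h2 : algebraMap ℚ (RepAlg (FreeAb n) m) (if i = j then 1 else 0)
        = (if i = j then 1 else 0) := by split_ifs <;> simp
    rw [h1, h2, ← sEl_eq]
    exact sEl_mem_JIdGen m n x0 i j
  | algebraMap r =>
    refine ⟨r, ?_⟩
    have : (⟨algebraMap ℚ (SLRep (FreeAb n) m → ℂ) r, Subalgebra.algebraMap_mem _ r⟩ :
        RepAlg (FreeAb n) m) = algebraMap ℚ _ r := Subtype.ext rfl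
    rw [this, sub_self]
    exact zero_mem _
  | add x y hx hy ihx ihy =>
    obtain ⟨q1, h1⟩ := ihx
    obtain ⟨q2, h2⟩ := ihy
    refine ⟨q1 + q2, ?_⟩
    have : (⟨x + y, add_mem hx hy⟩ : RepAlg (FreeAb n) m)
        = ⟨x, hx⟩ + ⟨y, hy⟩ := rfl
    rw [this, map_add]
    have heq : (⟨x, hx⟩ : RepAlg (FreeAb n) m) + ⟨y, hy⟩
        - (algebraMap ℚ _ q1 + algebraMap ℚ _ q2)
        = ((⟨x, hx⟩ : RepAlg (FreeAb n) m) - algebraMap ℚ _ q1)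
          + ((⟨y, hy⟩ : RepAlg (FreeAb n) m) - algebraMap ℚ _ q2) := by ring
    rw [heq]
    exact add_mem h1 h2
  | mul x y hx hy ihx ihy =>
    obtain ⟨q1, h1⟩ := ihx
    obtain ⟨q2, h2⟩ := ihy
    refine ⟨q1 * q2, ?_⟩
    have : (⟨x * y, mul_mem hx hy⟩ : RepAlg (FreeAb n) m)
        = ⟨x, hx⟩ * ⟨y, hy⟩ := rfl
    rw [this, map_mul]
    have heq : (⟨x, hx⟩ : RepAlg (FreeAb n) m) * ⟨y, hy⟩
        - algebraMap ℚ _ q1 * algebraMap ℚ _ q2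
        = (⟨x, hx⟩ : RepAlg (FreeAb n) m) * ((⟨y, hy⟩ : RepAlg (FreeAb n) m) - algebraMap ℚ _ q2)
          + algebraMap ℚ _ q2 * ((⟨x, hx⟩ : RepAlg (FreeAb n) m) - algebraMap ℚ _ q1) := by
      ring
    rw [heq]
    exact add_mem (Ideal.mul_mem_left _ _ h2) (Ideal.mul_mem_left _ _ h1)

lemma det_aEl {G : Type*} [Group G] (m : ℕ) (x : G) :
    (Matrix.of fun i j => aEl m i j x).det = 1 := by
  apply Subtype.ext
  have h1 := RingHom.map_det ((RepAlg G m).val.toRingHom) (Matrix.of fun i j => aEl m i j x)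
  have h2 : ((1 : RepAlg G m) : SLRep G m → ℂ) = 1 := rfl
  rw [show (((Matrix.of fun i j => aEl m i j x).det : RepAlg G m) : SLRep G m → ℂ)
      = (RepAlg G m).val.toRingHom (Matrix.of fun i j => aEl m i j x).det from rfl, h1, h2]
  funext ρ
  have h3 := RingHom.map_det (Pi.evalRingHom (fun _ : SLRep G m => ℂ) ρ)
    (((RepAlg G m).val.toRingHom).mapMatrix (Matrix.of fun i j => aEl m i j x))
  have h4 : ((((RepAlg G m).val.toRingHom).mapMatrix (Matrix.of fun i j => aEl m i j x)).det) ρ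
      = (Pi.evalRingHom (fun _ : SLRep G m => ℂ) ρ)
        ((((RepAlg G m).val.toRingHom).mapMatrix (Matrix.of fun i j => aEl m i j x)).det) := rfl
  rw [Pi.one_apply, h4, h3]
  have h5 : ((Pi.evalRingHom (fun _ : SLRep G m => ℂ) ρ).mapMatrix
      ((((RepAlg G m).val.toRingHom).mapMatrix (Matrix.of fun i j => aEl m i j x))))
      = ((ρ x : Matrix.SpecialLinearGroup (Fin m) ℂ) : Matrix (Fin m) (Fin m) ℂ) := by
    funext i j
    rfl
  rw [h5]
  exact (ρ x).2

end FreeAbLemmas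

section Part2
variable (m n : ℕ)

lemma part2 (hm : 2 ≤ m) :
    ((JIdGen m n (xH n) : Submodule (RepAlg (FreeAb n) m) (RepAlg (FreeAb n) m)).restrictScalars ℚ ≤
      Submodule.span ℚ
        (Set.range fun p : Eidx m n => sEl m p.1.1.1 p.1.1.2 (xH n p.2))
        ⊔ (JIdGen m n (xH n) ^ 2).restrictScalars ℚ) := by
  set J := JIdGen m n (xH n) with hJ
  set T : Submodule ℚ (RepAlg (FreeAb n) m) :=
    Submodule.span ℚ (Set.range fun p : Eidx m n => sEl m p.1.1.1 p.1.1.2 (xH n p.2))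
      ⊔ (J ^ 2).restrictScalars ℚ with hT
  have hL : m - 1 < m := by omega
  set L : Fin m := ⟨m - 1, hL⟩ with hLdef
  -- each basis-indexed generator is in T
  have hmemE : ∀ (i j : Fin m) (l : Fin n), ((i : ℕ), (j : ℕ)) ≠ (m - 1, m - 1) →
      sEl m i j (xH n l) ∈ T := by
    intro i j l hij
    refine Submodule.mem_sup_left (Submodule.subset_span ?_)
    exact ⟨(⟨(i, j), hij⟩, l), rfl⟩
  -- the diagonal sum is in J²
  have hdiag : ∀ l : Fin n, (∑ i, sEl m i i (xH n l)) ∈ J ^ 2 := by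
    intro l
    have h := det_sub_one_sub_sum_mem J (Matrix.of fun i j => aEl m i j (xH n l)) ?_
    · rw [det_aEl] at h
      have h2 : ∀ i : Fin m, (Matrix.of fun i j => aEl m i j (xH n l)) i i - 1
          = sEl m i i (xH n l) := by
        intro i
        rw [sEl_eq, if_pos rfl]
        rfl
      rw [Finset.sum_congr rfl (fun i _ => h2 i)] at h
      have h3 : (1 : RepAlg (FreeAb n) m) - 1 - (∑ i, sEl m i i (xH n l))
          = -(∑ i, sEl m i i (xH n l)) := by ring
      rw [h3] at h
      simpa using neg_mem h
    · intro i j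
      rw [show (Matrix.of fun i j => aEl m i j (xH n l)) i j = aEl m i j (xH n l) from rfl,
        ← sEl_eq]
      exact sEl_mem_JIdGen m n _ i j
  -- the (L,L) generator is in T
  have hLL : ∀ l : Fin n, sEl m L L (xH n l) ∈ T := by
    intro l
    have hsplit : sEl m L L (xH n l)
        = (∑ i, sEl m i i (xH n l)) - ∑ i ∈ Finset.univ.erase L, sEl m i i (xH n l) := by
      rw [← Finset.add_sum_erase _ _ (Finset.mem_univ L)]
      ring
    rw [hsplit]
    refine sub_mem (Submodule.mem_sup_right ?_) (Submodule.sum_mem _ ?_)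
    · exact hdiag l
    · intro i hi
      have hiL : i ≠ L := (Finset.mem_erase.mp hi).1
      refine hmemE i i l ?_
      intro hc
      apply hiL
      apply Fin.ext
      exact (Prod.mk.injEq _ _ _ _ ▸ hc).1
  have hgen : ∀ (i j : Fin m) (l : Fin n), sEl m i j (xH n l) ∈ T := by
    intro i j l
    by_cases hij : ((i : ℕ), (j : ℕ)) = (m - 1, m - 1)
    · have hi : i = L := Fin.ext (Prod.mk.injEq _ _ _ _ ▸ hij).1
      have hj : j = L := Fin.ext (Prod.mk.injEq _ _ _ _ ▸ hij).2
      rw [hi, hj]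
      exact hLL l
    · exact hmemE i j l hij
  -- main induction
  intro f hf
  have hf' : f ∈ Submodule.span (RepAlg (FreeAb n) m)
      {f | ∃ i j l, f = sEl m i j (xH n l)} := hf
  clear hf
  have key : f ∈ T ⊓ (J.restrictScalars ℚ) := by
    induction hf' using Submodule.span_induction with
    | mem x hx =>
      obtain ⟨i, j, l, rfl⟩ := hx
      exact ⟨hgen i j l, sEl_mem_JIdGen m n _ i j⟩
    | zero => exact zero_mem _
    | add x y hx hy ihx ihy => exact add_mem ihx ihy
    | smul a x hx ih =>
      obtain ⟨ihT, ihJ⟩ := ih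
      constructor
      · obtain ⟨q, hq⟩ := exists_decomp m n a
        have ha : a • x = (a - algebraMap ℚ _ q) * x + q • x := by
          rw [smul_eq_mul, Algebra.smul_def]
          ring
        rw [ha]
        refine add_mem (Submodule.mem_sup_right ?_) (Submodule.smul_mem _ _ ihT)
        show (a - algebraMap ℚ _ q) * x ∈ J ^ 2
        rw [pow_two]
        exact Ideal.mul_mem_mul hq ihJ
      · exact Ideal.mul_mem_left _ _ ihJ
  exact key.1

end Part2

section Part1Generic
variable {m n : ℕ}

lemma eval_J_zero {ρ0 : SLRep (FreeAb n) m}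
    (h1 : ∀ v, ((ρ0 v : Matrix.SpecialLinearGroup (Fin m) ℂ) : Matrix (Fin m) (Fin m) ℂ) = 1)
    {f : RepAlg (FreeAb n) m} (hf : f ∈ JIdGen m n (xH n)) :
    (f : SLRep (FreeAb n) m → ℂ) ρ0 = 0 := by
  set E : RepAlg (FreeAb n) m →ₐ[ℚ] ℂ :=
    (Pi.evalAlgHom ℚ (fun _ : SLRep (FreeAb n) m => ℂ) ρ0).comp (RepAlg (FreeAb n) m).val with hE
  have hker : JIdGen m n (xH n) ≤ RingHom.ker E.toRingHom := by
    rw [JIdGen, Ideal.span_le]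
    rintro _ ⟨i, j, l, rfl⟩
    show sfun m i j (xH n l) ρ0 = 0
    simp only [sfun, Pi.sub_apply, afun, h1, Matrix.one_apply,
      apply_ite (fun f : SLRep (FreeAb n) m → ℂ => f ρ0), Pi.one_apply, Pi.zero_apply]
    split_ifs <;> ring
  exact hker hf

lemma differentiable_eval (ρ : ℂ → SLRep (FreeAb n) m)
    (hρ : ∀ (x : FreeAb n) (i j : Fin m),
      Differentiable ℂ (fun z => ((ρ z x : Matrix.SpecialLinearGroup (Fin m) ℂ) :
        Matrix (Fin m) (Fin m) ℂ) i j))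
    (f : RepAlg (FreeAb n) m) :
    Differentiable ℂ (fun z => (f : SLRep (FreeAb n) m → ℂ) (ρ z)) := by
  obtain ⟨fv, hf⟩ := f
  show Differentiable ℂ (fun z => fv (ρ z))
  induction hf using Algebra.adjoin_induction with
  | mem x hx =>
    obtain ⟨i, j, x0, rfl⟩ := hx
    exact hρ x0 i j
  | algebraMap r =>
    exact differentiable_const _
  | add x y hx hy ihx ihy =>
    exact Differentiable.add ihx ihy
  | mul x y hx hy ihx ihy =>
    exact Differentiable.mul ihx ihy

lemma deriv_J2_zero (ρ : ℂ → SLRep (FreeAb n) m)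
    (hρ : ∀ (x : FreeAb n) (i j : Fin m),
      Differentiable ℂ (fun z => ((ρ z x : Matrix.SpecialLinearGroup (Fin m) ℂ) :
        Matrix (Fin m) (Fin m) ℂ) i j))
    (h0 : ∀ v, ((ρ 0 v : Matrix.SpecialLinearGroup (Fin m) ℂ) : Matrix (Fin m) (Fin m) ℂ) = 1)
    {f : RepAlg (FreeAb n) m} (hf : f ∈ JIdGen m n (xH n) ^ 2) :
    deriv (fun z => (f : SLRep (FreeAb n) m → ℂ) (ρ z)) 0 = 0 := by
  rw [pow_two] at hf
  refine Submodule.mul_induction_on hf ?_ ?_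
  · intro g hg h hh
    have dg := differentiable_eval ρ hρ g
    have dh := differentiable_eval ρ hρ h
    have heq : (fun z => ((g * h : RepAlg (FreeAb n) m) : SLRep (FreeAb n) m → ℂ) (ρ z))
        = fun z => ((g : SLRep (FreeAb n) m → ℂ) (ρ z)) * ((h : SLRep (FreeAb n) m → ℂ) (ρ z)) :=
      rfl
    rw [heq, deriv_fun_mul (dg 0) (dh 0), eval_J_zero h0 hg, eval_J_zero h0 hh]
    ring
  · intro x y hx hy
    have dx := differentiable_eval ρ hρ x
    have dy := differentiable_eval ρ hρ y
    have heq : (fun z => ((x + y : RepAlg (FreeAb n) m) : SLRep (FreeAb n) m → ℂ) (ρ z))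
        = fun z => ((x : SLRep (FreeAb n) m → ℂ) (ρ z)) + ((y : SLRep (FreeAb n) m → ℂ) (ρ z)) :=
      rfl
    rw [heq, deriv_fun_add (dx 0) (dy 0), hx, hy, add_zero]

lemma val_sum_apply (m n : ℕ) (c : Eidx m n → ℚ) (ρ' : SLRep (FreeAb n) m) :
    ((∑ p : Eidx m n, c p • sEl m p.1.1.1 p.1.1.2 (xH n p.2) :
        RepAlg (FreeAb n) m) : SLRep (FreeAb n) m → ℂ) ρ'
      = ∑ p : Eidx m n, (c p : ℂ) * sfun m p.1.1.1 p.1.1.2 (xH n p.2) ρ' := by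
  rw [AddSubmonoidClass.coe_finset_sum, Finset.sum_apply]
  apply Finset.sum_congr rfl
  intro p _
  rw [show ((c p • sEl m p.1.1.1 p.1.1.2 (xH n p.2) : RepAlg (FreeAb n) m) :
      SLRep (FreeAb n) m → ℂ) = c p • (sfun m p.1.1.1 p.1.1.2 (xH n p.2)) from rfl]
  rw [Pi.smul_apply, Rat.smul_def]

end Part1Generic

section Families
variable (m n : ℕ)

/-- Off-diagonal one-parameter family. -/
noncomputable def rhoA (i0 j0 : Fin m) (h : i0 ≠ j0) (l0 : Fin n) (z : ℂ) :
    SLRep (FreeAb n) m where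
  toFun v := ⟨Matrix.transvection i0 j0 (((Multiplicative.toAdd v l0 : ℤ) : ℂ) * z),
    Matrix.det_transvection_of_ne i0 j0 h _⟩
  map_one' := by
    apply Subtype.ext
    show Matrix.transvection i0 j0 _ = (1 : Matrix (Fin m) (Fin m) ℂ)
    norm_num [Matrix.transvection]
  map_mul' v w := by
    apply Subtype.ext
    show Matrix.transvection i0 j0 _ = Matrix.transvection i0 j0 _ * Matrix.transvection i0 j0 _
    rw [Matrix.transvection_mul_transvection_same _ _ h]
    have hc : ((Multiplicative.toAdd (v * w) l0 : ℤ) : ℂ) * z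
        = ((Multiplicative.toAdd v l0 : ℤ) : ℂ) * z + ((Multiplicative.toAdd w l0 : ℤ) : ℂ) * z := by
      push_cast [show Multiplicative.toAdd (v * w) l0
        = Multiplicative.toAdd v l0 + Multiplicative.toAdd w l0 from rfl]
      ring
    rw [hc]

lemma rhoA_apply (i0 j0 : Fin m) (h : i0 ≠ j0) (l0 : Fin n) (z : ℂ) (v : FreeAb n)
    (i j : Fin m) :
    ((rhoA m n i0 j0 h l0 z v : Matrix.SpecialLinearGroup (Fin m) ℂ) :
      Matrix (Fin m) (Fin m) ℂ) i j
    = (if i = j then 1 else 0) +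
      (if i0 = i ∧ j0 = j then ((Multiplicative.toAdd v l0 : ℤ) : ℂ) * z else 0) := by
  show Matrix.transvection i0 j0 _ i j = _
  simp only [Matrix.transvection, Matrix.add_apply, Matrix.one_apply, Matrix.single,
    Matrix.of_apply]

lemma rhoA_diff (i0 j0 : Fin m) (h : i0 ≠ j0) (l0 : Fin n) :
    ∀ (x : FreeAb n) (i j : Fin m),
      Differentiable ℂ (fun z => ((rhoA m n i0 j0 h l0 z x :
        Matrix.SpecialLinearGroup (Fin m) ℂ) : Matrix (Fin m) (Fin m) ℂ) i j) := by
  intro x i j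
  simp only [rhoA_apply]
  apply Differentiable.add (differentiable_const _)
  split_ifs
  · exact (differentiable_id.const_mul _)
  · exact differentiable_const _

lemma rhoA_zero (i0 j0 : Fin m) (h : i0 ≠ j0) (l0 : Fin n) (v : FreeAb n) :
    ((rhoA m n i0 j0 h l0 0 v : Matrix.SpecialLinearGroup (Fin m) ℂ) :
      Matrix (Fin m) (Fin m) ℂ) = 1 := by
  funext i j
  rw [rhoA_apply, Matrix.one_apply]
  split_ifs <;> ring

lemma sfun_rhoA (i0 j0 : Fin m) (h : i0 ≠ j0) (l0 : Fin n) (z : ℂ) (i j : Fin m) (l : Fin n) :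
    sfun m i j (xH n l) (rhoA m n i0 j0 h l0 z)
    = if i0 = i ∧ j0 = j ∧ l = l0 then z else 0 := by
  simp only [sfun, Pi.sub_apply, afun,
    apply_ite (fun f : SLRep (FreeAb n) m → ℂ => f (rhoA m n i0 j0 h l0 z)),
    Pi.one_apply, Pi.zero_apply, rhoA_apply]
  have hx : (Multiplicative.toAdd (xH n l) l0 : ℤ) = if l = l0 then 1 else 0 := by
    have h0 : Multiplicative.toAdd (xH n l) = Pi.single l (1 : ℤ) := rfl
    rw [h0, Pi.single_apply]
    split_ifs with h1 h2 h2 <;> first | rfl | (exact absurd h1.symm h2) | (exact absurd h2.symm h1)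
  rw [hx]
  by_cases h1 : i0 = i <;> by_cases h2 : j0 = j <;> by_cases h3 : l = l0 <;>
    simp [h1, h2, h3] <;> split_ifs <;> ring

/-- Diagonal one-parameter family. -/
noncomputable def evec (i0 L : Fin m) : Fin m → ℂ :=
  fun k => if k = i0 then 1 else if k = L then -1 else 0

lemma evec_sum (i0 L : Fin m) (h : i0 ≠ L) : ∑ k, evec m i0 L k = 0 := by
  have he : ∀ k, evec m i0 L k
      = (if k = i0 then (1:ℂ) else 0) + (if k = L then -1 else 0) := by
    intro k
    unfold evec
    split_ifs with h1 h2 <;> simp_all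
  rw [Finset.sum_congr rfl (fun k _ => he k), Finset.sum_add_distrib]
  simp

noncomputable def rhoB (i0 L : Fin m) (h : i0 ≠ L) (l0 : Fin n) (z : ℂ) :
    SLRep (FreeAb n) m where
  toFun v := ⟨Matrix.diagonal (fun k =>
      Complex.exp (((Multiplicative.toAdd v l0 : ℤ) : ℂ) * z * evec m i0 L k)), by
    rw [Matrix.det_diagonal, ← Complex.exp_sum, ← Finset.mul_sum, evec_sum m i0 L h,
      mul_zero, Complex.exp_zero]⟩
  map_one' := by
    apply Subtype.ext
    show Matrix.diagonal _ = (1 : Matrix (Fin m) (Fin m) ℂ)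
    rw [← Matrix.diagonal_one]
    refine congrArg Matrix.diagonal ?_
    funext k
    norm_num
  map_mul' v w := by
    apply Subtype.ext
    show Matrix.diagonal _ = Matrix.diagonal _ * Matrix.diagonal _
    rw [Matrix.diagonal_mul_diagonal]
    refine congrArg Matrix.diagonal ?_
    funext k
    rw [← Complex.exp_add]
    congr 1
    push_cast [show Multiplicative.toAdd (v * w) l0
      = Multiplicative.toAdd v l0 + Multiplicative.toAdd w l0 from rfl]
    ring

lemma rhoB_apply (i0 L : Fin m) (h : i0 ≠ L) (l0 : Fin n) (z : ℂ) (v : FreeAb n)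
    (i j : Fin m) :
    ((rhoB m n i0 L h l0 z v : Matrix.SpecialLinearGroup (Fin m) ℂ) :
      Matrix (Fin m) (Fin m) ℂ) i j
    = if i = j then Complex.exp (((Multiplicative.toAdd v l0 : ℤ) : ℂ) * z * evec m i0 L i)
      else 0 := by
  show Matrix.diagonal _ i j = _
  rw [Matrix.diagonal_apply]

lemma rhoB_diff (i0 L : Fin m) (h : i0 ≠ L) (l0 : Fin n) :
    ∀ (x : FreeAb n) (i j : Fin m),
      Differentiable ℂ (fun z => ((rhoB m n i0 L h l0 z x :
        Matrix.SpecialLinearGroup (Fin m) ℂ) : Matrix (Fin m) (Fin m) ℂ) i j) := by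
  intro x i j
  simp only [rhoB_apply]
  split_ifs
  · exact ((differentiable_id.const_mul _).mul_const _).cexp
  · exact differentiable_const _

lemma rhoB_zero (i0 L : Fin m) (h : i0 ≠ L) (l0 : Fin n) (v : FreeAb n) :
    ((rhoB m n i0 L h l0 0 v : Matrix.SpecialLinearGroup (Fin m) ℂ) :
      Matrix (Fin m) (Fin m) ℂ) = 1 := by
  funext i j
  rw [rhoB_apply, Matrix.one_apply]
  split_ifs <;> norm_num

lemma sfun_rhoB (i0 L : Fin m) (h : i0 ≠ L) (l0 : Fin n) (z : ℂ) (i j : Fin m) (l : Fin n) :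
    sfun m i j (xH n l) (rhoB m n i0 L h l0 z)
    = if i = j then
        Complex.exp ((if l = l0 then (1:ℂ) else 0) * z * evec m i0 L i) - 1
      else 0 := by
  simp only [sfun, Pi.sub_apply, afun,
    apply_ite (fun f : SLRep (FreeAb n) m → ℂ => f (rhoB m n i0 L h l0 z)),
    Pi.one_apply, Pi.zero_apply, rhoB_apply]
  have hx : ((Multiplicative.toAdd (xH n l) l0 : ℤ) : ℂ) = if l = l0 then 1 else 0 := by
    have h0 : Multiplicative.toAdd (xH n l) = Pi.single l (1 : ℤ) := rfl
    rw [h0, Pi.single_apply, apply_ite (fun t : ℤ => (t : ℂ))]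
    simp only [Int.cast_one, Int.cast_zero]
    split_ifs with h1 h2 h2 <;>
      first | rfl | (exact absurd h1.symm h2) | (exact absurd h2.symm h1)
  rw [hx]
  split_ifs <;> ring

end Families

section Part1
variable (m n : ℕ)

lemma part1 (hm : 2 ≤ m) :
    ∀ c : Eidx m n → ℚ,
      (∑ p : Eidx m n, c p • sEl m p.1.1.1 p.1.1.2 (xH n p.2)) ∈ JIdGen m n (xH n) ^ 2 →
      ∀ p : Eidx m n, c p = 0 := by
  intro c hc p0
  obtain ⟨⟨⟨i0, j0⟩, hp⟩, l0⟩ := p0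
  set P0 : Eidx m n := (⟨(i0, j0), hp⟩, l0) with hP0
  show c P0 = 0
  by_cases hd : i0 = j0
  · -- diagonal case
    subst hd
    have hL : m - 1 < m := by omega
    set L : Fin m := ⟨m - 1, hL⟩ with hLdef
    have hi0L : i0 ≠ L := by
      intro hc'
      apply hp
      rw [hc']
    set ρ := rhoB m n i0 L hi0L l0 with hρ
    have h1 : deriv (fun z => ((∑ p : Eidx m n, c p • sEl m p.1.1.1 p.1.1.2 (xH n p.2) :
        RepAlg (FreeAb n) m) : SLRep (FreeAb n) m → ℂ) (ρ z)) 0 = 0 :=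
      deriv_J2_zero ρ (rhoB_diff m n i0 L hi0L l0) (rhoB_zero m n i0 L hi0L l0) hc
    set d : Eidx m n → ℂ := fun p =>
      if p.1.1.1 = p.1.1.2 then (if p.2 = l0 then 1 else 0) * evec m i0 L p.1.1.1 else 0
      with hdDef
    have hHD : ∀ p : Eidx m n,
        HasDerivAt (fun z => sfun m p.1.1.1 p.1.1.2 (xH n p.2) (ρ z)) (d p) 0 := by
      intro p
      have heq : (fun z => sfun m p.1.1.1 p.1.1.2 (xH n p.2) (ρ z))
          = fun z => if p.1.1.1 = p.1.1.2 then
              Complex.exp ((if p.2 = l0 then (1:ℂ) else 0) * z * evec m i0 L p.1.1.1) - 1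
            else 0 := by
        funext z
        exact sfun_rhoB m n i0 L hi0L l0 z p.1.1.1 p.1.1.2 p.2
      rw [heq]
      by_cases hdg : p.1.1.1 = p.1.1.2
      · have hfun : (fun z : ℂ => if p.1.1.1 = p.1.1.2 then
            Complex.exp ((if p.2 = l0 then (1:ℂ) else 0) * z * evec m i0 L p.1.1.1) - 1 else 0)
            = fun z : ℂ => Complex.exp ((if p.2 = l0 then (1:ℂ) else 0) * z
              * evec m i0 L p.1.1.1) - 1 := by
          funext z
          rw [if_pos hdg]
        rw [hfun]
        have hvald : d p = (if p.2 = l0 then (1:ℂ) else 0) * evec m i0 L p.1.1.1 := by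
          rw [hdDef]
          dsimp only
          rw [if_pos hdg]
        rw [hvald]
        have base : HasDerivAt (fun z : ℂ =>
            (if p.2 = l0 then (1:ℂ) else 0) * z * evec m i0 L p.1.1.1)
            ((if p.2 = l0 then (1:ℂ) else 0) * 1 * evec m i0 L p.1.1.1) 0 :=
          ((hasDerivAt_id 0).const_mul _).mul_const _
        have h2 := (base.cexp).sub_const 1
        exact h2.congr_deriv (by simp)
      · have hfun : (fun z : ℂ => if p.1.1.1 = p.1.1.2 then
            Complex.exp ((if p.2 = l0 then (1:ℂ) else 0) * z * evec m i0 L p.1.1.1) - 1 else 0)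
            = fun _ : ℂ => (0:ℂ) := by
          funext z
          rw [if_neg hdg]
        rw [hfun]
        have hvald : d p = 0 := by
          rw [hdDef]
          dsimp only
          rw [if_neg hdg]
        rw [hvald]
        exact hasDerivAt_const _ _
    have hF : (fun z => ((∑ p : Eidx m n, c p • sEl m p.1.1.1 p.1.1.2 (xH n p.2) :
        RepAlg (FreeAb n) m) : SLRep (FreeAb n) m → ℂ) (ρ z))
        = fun z => ∑ p : Eidx m n, (c p : ℂ) * sfun m p.1.1.1 p.1.1.2 (xH n p.2) (ρ z) := by
      funext z
      exact val_sum_apply m n c (ρ z)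
    have hsum : HasDerivAt (fun z => ∑ p : Eidx m n,
        (c p : ℂ) * sfun m p.1.1.1 p.1.1.2 (xH n p.2) (ρ z))
        (∑ p : Eidx m n, (c p : ℂ) * d p) 0 :=
      HasDerivAt.fun_sum (fun p _ => (hHD p).const_mul _)
    have hval : (∑ p : Eidx m n, (c p : ℂ) * d p) = (c P0 : ℂ) := by
      rw [Finset.sum_eq_single P0]
      · have : d P0 = 1 := by
          simp [hdDef, evec, hP0]
        rw [this, mul_one]
      · rintro ⟨⟨⟨i, j⟩, hq⟩, l⟩ _ hne
        have hd0 : d (⟨(i, j), hq⟩, l) = 0 := by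
          simp only [hdDef]
          by_cases hij : i = j
          · rw [if_pos hij]
            by_cases hll : l = l0
            · rw [if_pos hll]
              have hii0 : i ≠ i0 := by
                intro hii
                apply hne
                subst hii hij hll
                rfl
              have hiL : i ≠ L := by
                intro hiLe
                apply hq
                rw [hiLe, ← hij, hiLe]
              rw [evec, if_neg hii0, if_neg hiL]
              ring
            · rw [if_neg hll]; ring
          · rw [if_neg hij]
        rw [hd0, mul_zero]
      · intro h; exact absurd (Finset.mem_univ _) h
    rw [hF] at h1
    rw [hsum.deriv, hval] at h1
    exact_mod_cast h1
  · -- off-diagonal case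
    set ρ := rhoA m n i0 j0 hd l0 with hρ
    have h1 : deriv (fun z => ((∑ p : Eidx m n, c p • sEl m p.1.1.1 p.1.1.2 (xH n p.2) :
        RepAlg (FreeAb n) m) : SLRep (FreeAb n) m → ℂ) (ρ z)) 0 = 0 :=
      deriv_J2_zero ρ (rhoA_diff m n i0 j0 hd l0) (rhoA_zero m n i0 j0 hd l0) hc
    have hF : (fun z => ((∑ p : Eidx m n, c p • sEl m p.1.1.1 p.1.1.2 (xH n p.2) :
        RepAlg (FreeAb n) m) : SLRep (FreeAb n) m → ℂ) (ρ z))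
        = fun z => (c P0 : ℂ) * z := by
      funext z
      rw [val_sum_apply m n c (ρ z)]
      rw [Finset.sum_eq_single P0]
      · rw [show sfun m P0.1.1.1 P0.1.1.2 (xH n P0.2) (ρ z)
            = if i0 = P0.1.1.1 ∧ j0 = P0.1.1.2 ∧ P0.2 = l0 then z else 0 from
          sfun_rhoA m n i0 j0 hd l0 z _ _ _]
        rw [if_pos ⟨rfl, rfl, rfl⟩]
      · rintro ⟨⟨⟨i, j⟩, hq⟩, l⟩ _ hne
        rw [sfun_rhoA m n i0 j0 hd l0 z]
        rw [if_neg, mul_zero]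
        rintro ⟨ha, hb, hcc⟩
        apply hne
        subst ha hb hcc
        rfl
      · intro h; exact absurd (Finset.mem_univ _) h
    rw [hF] at h1
    have hD : HasDerivAt (fun z : ℂ => (c P0 : ℂ) * z) ((c P0 : ℂ)) 0 := by
      simpa using (hasDerivAt_id (0 : ℂ)).const_mul (c P0 : ℂ)
    rw [hD.deriv] at h1
    exact_mod_cast h1

end Part1

section Part3
variable (m n : ℕ)

lemma card_Eidx (hm : 2 ≤ m) : Fintype.card (Eidx m n) = (m ^ 2 - 1) * n := by
  rw [Fintype.card_prod, Fintype.card_fin]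
  congr 1
  have hL : m - 1 < m := by omega
  set L : Fin m := ⟨m - 1, hL⟩ with hLdef
  have hiff : ∀ x : Fin m × Fin m,
      (((x.1 : ℕ), (x.2 : ℕ)) = (m - 1, m - 1)) ↔ x = (L, L) := by
    intro x
    rw [Prod.ext_iff, Prod.ext_iff, Fin.ext_iff, Fin.ext_iff]
  have hcompl := Fintype.card_subtype_compl
    (fun x : Fin m × Fin m => ((x.1 : ℕ), (x.2 : ℕ)) = (m - 1, m - 1))
  have hone : Fintype.card {x : Fin m × Fin m // ((x.1 : ℕ), (x.2 : ℕ)) = (m - 1, m - 1)}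
      = 1 := by
    rw [Fintype.card_congr (Equiv.subtypeEquivRight hiff)]
    exact Fintype.card_subtype_eq (L, L)
  calc Fintype.card {p : Fin m × Fin m // ((p.1 : ℕ), (p.2 : ℕ)) ≠ (m - 1, m - 1)}
      = Fintype.card (Fin m × Fin m) -
        Fintype.card {x : Fin m × Fin m // ((x.1 : ℕ), (x.2 : ℕ)) = (m - 1, m - 1)} := hcompl
    _ = m ^ 2 - 1 := by
        rw [hone, Fintype.card_prod, Fintype.card_fin, pow_two]


lemma abstract3 {A : Type*} [CommRing A] [Algebra ℚ A] (J : Ideal A)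
    {ι : Type*} [Fintype ι] (s : ι → A)
    (hs : ∀ i, s i ∈ J)
    (h1 : ∀ c : ι → ℚ, (∑ i, c i • s i) ∈ J ^ 2 → ∀ i, c i = 0)
    (h2 : (J : Submodule A A).restrictScalars ℚ ≤
      Submodule.span ℚ (Set.range s) ⊔ (J ^ 2 : Ideal A).restrictScalars ℚ) :
    Module.finrank ℚ ((J.map (Ideal.Quotient.mk (J ^ 2))).restrictScalars ℚ)
      = Fintype.card ι := by
  classical
  set K := J ^ 2 with hK
  set π := Ideal.Quotient.mk K with hπ
  set N : Submodule ℚ (A ⧸ K) := (J.map π).restrictScalars ℚ with hN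
  have hsmem : ∀ i : ι, π (s i) ∈ N := fun i => Ideal.mem_map_of_mem π (hs i)
  set b : ι → N := fun i => ⟨π (s i), hsmem i⟩ with hb
  set q : A →ₗ[ℚ] (A ⧸ K) := (Ideal.Quotient.mkₐ ℚ K).toLinearMap with hq
  have hli : LinearIndependent ℚ b := by
    rw [Fintype.linearIndependent_iff]
    intro g hg
    have hval : (↑(∑ i : ι, g i • b i) : A ⧸ K) = ∑ i : ι, g i • π (s i) := by
      rw [AddSubmonoidClass.coe_finset_sum]
      apply Finset.sum_congr rfl
      intro i _
      rfl
    have h0 : (∑ i : ι, g i • π (s i)) = π (∑ i : ι, g i • s i) := by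
      have hπq : π (∑ i : ι, g i • s i) = q (∑ i : ι, g i • s i) := rfl
      rw [hπq, map_sum q]
      apply Finset.sum_congr rfl
      intro i _
      rw [map_smul]
      rfl
    have hz : π (∑ i : ι, g i • s i) = 0 := by
      rw [← h0, ← hval, hg]
      rfl
    exact h1 g (Ideal.Quotient.eq_zero_iff_mem.mp hz)
  have hsp : ⊤ ≤ Submodule.span ℚ (Set.range b) := by
    rintro ⟨yv, hy⟩ _
    have hy' : yv ∈ J.map π := hy
    rw [Ideal.mem_map_iff_of_surjective _ Ideal.Quotient.mk_surjective] at hy'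
    obtain ⟨f, hf, rfl⟩ := hy'
    obtain ⟨t, ht, e, he, hte⟩ := Submodule.mem_sup.mp (h2 hf)
    have hπf : π f = π t := by
      rw [← hte, map_add, Ideal.Quotient.eq_zero_iff_mem.mpr he, add_zero]
    have hπt : π t ∈ Submodule.span ℚ (Set.range fun i => π (s i)) := by
      have hmm : q t ∈ Submodule.map q (Submodule.span ℚ (Set.range s)) :=
        Submodule.mem_map_of_mem ht
      rw [Submodule.map_span, ← Set.range_comp] at hmm
      exact hmm
    have hmap : Submodule.map N.subtype (Submodule.span ℚ (Set.range b))
        = Submodule.span ℚ (Set.range fun i => π (s i)) := by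
      rw [Submodule.map_span, ← Set.range_comp]
      rfl
    have hmem3 : π f ∈ Submodule.map N.subtype (Submodule.span ℚ (Set.range b)) := by
      rw [hmap, hπf]
      exact hπt
    obtain ⟨w, hw, hweq⟩ := hmem3
    have hwe : w = ⟨π f, hy⟩ := Subtype.ext hweq
    rw [← hwe]
    exact hw
  rw [Module.finrank_eq_card_basis (Module.Basis.mk hli hsp)]

lemma part3 (hm : 2 ≤ m) (hn : 1 ≤ n) :
    Module.finrank ℚ
        (((JIdGen m n (xH n)).map (Ideal.Quotient.mk (JIdGen m n (xH n) ^ 2))).restrictScalars ℚ) =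
      (m ^ 2 - 1) * n := by
  rw [abstract3 (JIdGen m n (xH n))
    (fun p : Eidx m n => sEl m p.1.1.1 p.1.1.2 (xH n p.2))
    (fun p => sEl_mem_JIdGen m n _ _ _)
    (part1 m n hm)
    (part2 m n hm)]
  exact card_Eidx m n hm

end Part3

/-- for the free abelian group `H` of rank `n`, the classes of the
`s_{ij}(x̄_l)` with `(i,j) ≠ (m,m)` form a ℚ-basis of `gr¹(𝔍_H) = 𝔍_H/𝔍_H²`: they are
linearly independent modulo `𝔍_H²`, they span `𝔍_H` modulo `𝔍_H²`, and
`dim_ℚ gr¹(𝔍_H) = (m²−1)n`. -/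
theorem gr1_basis_free_abelian (m n : ℕ) (hm : 2 ≤ m) (hn : 1 ≤ n) :
    (∀ c : Eidx m n → ℚ,
      (∑ p : Eidx m n, c p • sEl m p.1.1.1 p.1.1.2 (xH n p.2)) ∈ JIdGen m n (xH n) ^ 2 →
      ∀ p : Eidx m n, c p = 0) ∧
    ((JIdGen m n (xH n) : Submodule (RepAlg (FreeAb n) m) (RepAlg (FreeAb n) m)).restrictScalars ℚ ≤
      Submodule.span ℚ
        (Set.range fun p : Eidx m n => sEl m p.1.1.1 p.1.1.2 (xH n p.2))
        ⊔ (JIdGen m n (xH n) ^ 2).restrictScalars ℚ) ∧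
    (Module.finrank ℚ
        ((JIdGen m n (xH n)).map (Ideal.Quotient.mk (JIdGen m n (xH n) ^ 2)) |>.restrictScalars ℚ) =
      (m ^ 2 - 1) * n) := by
  exact ⟨part1 m n hm, part2 m n hm, part3 m n hm hn⟩
end
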